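/- arXiv:1205.4260 — 2 statements merged into one kernel-verified Lean document; each statement's English description precedes it below -/
import Mathlib

section
/- Let f := ‖μ_ℂ‖². Then for every (x,y) ∈ ℂᴺ × ℂᴺ the gradient satisfies ‖∇f(x,y)‖² = 4·Σ_{j=1}^{N} (|x_j|² + |y_j|²)·|⟪u_j, μ_ℂ(x,y)⟫|², where ⟪u_j, μ_ℂ(x,y)⟫ denotes the standard Hermitian inner product on ℂᴺ. -/
noncomputable section

/-- `T*ℂᴺ = ℂᴺ × ℂᴺ` with its L² (Hermitian) norm. -/
abbrev HypPhase (N : ℕ) := WithLp 2 (EuclideanSpace ℂ (Fin N) × EuclideanSpace ℂ (Fin N))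

/-- The inclusion `ℝᴺ ⊆ ℂᴺ`. -/
def toC {N : ℕ} (v : EuclideanSpace ℝ (Fin N)) : EuclideanSpace ℂ (Fin N) :=
  (WithLp.equiv 2 (Fin N → ℂ)).symm fun i => ((WithLp.equiv 2 (Fin N → ℝ) v) i : ℂ)


open ComplexConjugate

lemma real_inner_eq_re_complex {N : ℕ} (a b : EuclideanSpace ℂ (Fin N)) :
    (inner ℝ a b : ℝ) = (inner ℂ a b : ℂ).re := by
  simp [PiLp.inner_apply, Complex.re_sum]

/-- Explicit formula for the norm of the gradient of the norm-square of
the complex moment map of a linear torus action on `T*ℂᴺ`. -/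
theorem stmt8 (N : ℕ) (𝔱 : Submodule ℝ (EuclideanSpace ℝ (Fin N)))
    (u : Fin N → EuclideanSpace ℝ (Fin N))
    (hu : ∀ j, u j = (𝔱.orthogonalProjectionOnto (EuclideanSpace.single j 1) :
      EuclideanSpace ℝ (Fin N)))
    (β : EuclideanSpace ℂ (Fin N))
    (hβ : β ∈ Submodule.span ℂ (toC '' (𝔱 : Set (EuclideanSpace ℝ (Fin N)))))
    (μC : HypPhase N → EuclideanSpace ℂ (Fin N))
    (hμC : ∀ p : HypPhase N, μC p = (∑ j, (p.ofLp.1 j * p.ofLp.2 j) • toC (u j)) - β)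
    (f : HypPhase N → ℝ) (hf : ∀ p, f p = ‖μC p‖ ^ 2) :
    ∀ p : HypPhase N,
      ‖gradient f p‖ ^ 2
        = 4 * ∑ j, (‖p.ofLp.1 j‖ ^ 2 + ‖p.ofLp.2 j‖ ^ 2) * ‖(inner ℂ (toC (u j)) (μC p) : ℂ)‖ ^ 2 := by
  intro p
  set w : Fin N → EuclideanSpace ℂ (Fin N) := fun j => toC (u j) with hw
  set c : Fin N → ℂ := fun j => (inner ℂ (w j) (μC p) : ℂ) with hc
  have hc' : ∀ j, (inner ℂ (w j) (μC p) : ℂ) = c j := fun _ => rfl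
  -- coordinate continuous linear maps
  set Φ : HypPhase N →L[ℂ] EuclideanSpace ℂ (Fin N) × EuclideanSpace ℂ (Fin N) :=
    (WithLp.prodContinuousLinearEquiv 2 ℂ _ _).toContinuousLinearMap with hΦ
  set π1 : Fin N → (HypPhase N →L[ℂ] ℂ) :=
    fun j => (EuclideanSpace.proj j).comp ((ContinuousLinearMap.fst ℂ _ _).comp Φ) with hπ1
  set π2 : Fin N → (HypPhase N →L[ℂ] ℂ) :=
    fun j => (EuclideanSpace.proj j).comp ((ContinuousLinearMap.snd ℂ _ _).comp Φ) with hπ2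
  have hπ1a : ∀ j v, π1 j v = v.ofLp.1 j := fun _ _ => rfl
  have hπ2a : ∀ j v, π2 j v = v.ofLp.2 j := fun _ _ => rfl
  -- the complex derivative of μC at p
  set L : HypPhase N →L[ℂ] EuclideanSpace ℂ (Fin N) :=
    ∑ j, ((p.ofLp.1 j • π2 j + p.ofLp.2 j • π1 j).smulRight (w j)) with hL
  have hμder : HasFDerivAt μC L p := by
    have h2 : HasFDerivAt (fun q : HypPhase N => ∑ j, (q.ofLp.1 j * q.ofLp.2 j) • w j) L p := by
      rw [hL]
      exact HasFDerivAt.fun_sum fun j _ =>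
        ((π1 j).hasFDerivAt.mul (π2 j).hasFDerivAt).smul_const (w j)
    have h3 := h2.sub_const β
    have h4 : μC = fun q : HypPhase N => (∑ j, (q.ofLp.1 j * q.ofLp.2 j) • w j) - β := funext hμC
    rw [h4]
    exact h3
  -- value of L
  have hLv : ∀ v : HypPhase N, L v = ∑ j, ((p.ofLp.1 j * v.ofLp.2 j + p.ofLp.2 j * v.ofLp.1 j) • w j) := by
    intro v
    rw [hL, ContinuousLinearMap.sum_apply]
    refine Finset.sum_congr rfl fun j _ => ?_
    simp [ContinuousLinearMap.smulRight_apply, hπ1a, hπ2a, smul_smul]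
  -- derivative of f
  set Lr : HypPhase N →L[ℝ] EuclideanSpace ℂ (Fin N) := L.restrictScalars ℝ with hLr
  set D : HypPhase N →L[ℝ] ℝ := (fderivInnerCLM ℝ (μC p, μC p)).comp (Lr.prod Lr) with hD
  have hfder : HasFDerivAt f D p := by
    have h1 : HasFDerivAt μC Lr p := hμder.restrictScalars ℝ
    have h2 := h1.inner ℝ h1
    have h3 : f = fun q : HypPhase N => (inner ℝ (μC q) (μC q) : ℝ) := by
      funext q; rw [hf q, real_inner_self_eq_norm_sq]
    rw [h3]
    exact h2
  -- the gradient
  set G : HypPhase N := (WithLp.equiv 2 _).symm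
    ((WithLp.equiv 2 (Fin N → ℂ)).symm (fun j => 2 * c j * conj (p.ofLp.2 j)),
     (WithLp.equiv 2 (Fin N → ℂ)).symm (fun j => 2 * c j * conj (p.ofLp.1 j))) with hG
  have hG1 : ∀ j, G.ofLp.1 j = 2 * c j * conj (p.ofLp.2 j) := fun _ => rfl
  have hG2 : ∀ j, G.ofLp.2 j = 2 * c j * conj (p.ofLp.1 j) := fun _ => rfl
  have hgrad : HasGradientAt f G p := by
    rw [hasGradientAt_iff_hasFDerivAt]
    refine hfder.congr_fderiv ?_
    refine (ContinuousLinearMap.ext fun v => ?_).symm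
    have hDv : D v = 2 * ((inner ℂ (μC p) (L v) : ℂ)).re := by
      rw [hD]
      simp only [ContinuousLinearMap.comp_apply, ContinuousLinearMap.prod_apply,
        fderivInnerCLM_apply]
      have hr : (Lr v : EuclideanSpace ℂ (Fin N)) = L v := rfl
      rw [hr, real_inner_eq_re_complex, real_inner_eq_re_complex,
        ← inner_conj_symm (L v) (μC p), Complex.conj_re]
      ring
    have hinner : (inner ℂ (μC p) (L v) : ℂ)
        = ∑ j, (p.ofLp.1 j * v.ofLp.2 j + p.ofLp.2 j * v.ofLp.1 j) * conj (c j) := by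
      rw [hLv v, inner_sum]
      refine Finset.sum_congr rfl fun j _ => ?_
      rw [inner_smul_right, ← hc' j, inner_conj_symm]
    rw [InnerProductSpace.toDual_apply_apply, hDv, hinner, WithLp.prod_inner_apply,
      real_inner_eq_re_complex, real_inner_eq_re_complex]
    simp only [PiLp.inner_apply, RCLike.inner_apply]
    rw [← Complex.add_re, ← Finset.sum_add_distrib]
    have key : (∑ j, (v.ofLp.1 j * conj (G.ofLp.1 j) + v.ofLp.2 j * conj (G.ofLp.2 j)))
        = (2 : ℂ) * ∑ j, (p.ofLp.1 j * v.ofLp.2 j + p.ofLp.2 j * v.ofLp.1 j) * conj (c j) := by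
      rw [Finset.mul_sum]
      refine Finset.sum_congr rfl fun j _ => ?_
      rw [hG1 j, hG2 j]
      simp only [map_mul, Complex.conj_conj, map_ofNat]
      ring
    rw [key]
    simp [Complex.mul_re]
  rw [hgrad.gradient]
  -- compute the norm of G
  simp only [show ∀ j, (inner ℂ (toC (u j)) (μC p) : ℂ) = c j from fun _ => rfl]
  rw [← real_inner_self_eq_norm_sq, WithLp.prod_inner_apply,
    real_inner_eq_re_complex, real_inner_eq_re_complex]
  simp only [PiLp.inner_apply, RCLike.inner_apply]
  rw [Complex.re_sum, Complex.re_sum, ← Finset.sum_add_distrib, Finset.mul_sum]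
  refine Finset.sum_congr rfl fun j _ => ?_
  have hz : ∀ z : ℂ, (z * conj z).re = ‖z‖ ^ 2 := by
    intro z
    rw [Complex.mul_conj, Complex.ofReal_re, Complex.normSq_eq_norm_sq]
  rw [hG1 j, hG2 j, hz, hz]
  simp only [norm_mul, RCLike.norm_conj, Complex.norm_ofNat]
  ring
end
end

section
/- A point (x,y) ∈ ℂᴺ × ℂᴺ is a critical point of f := ‖μ_ℂ‖² (i.e. ∇f(x,y) = 0) if and only if (x,y) ∈ C_J for some critical subset J ⊆ {1,…,N}; equivalently, if and only if for every j ∈ {1,…,N} either x_j = y_j = 0 or ⟪u_j, μ_ℂ(x,y)⟫ = 0. -/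
noncomputable section

/-- `J` is a critical subset for the family of weights `u`: `u i` lies in the span of
`{u j : j ∈ J}` iff `i ∈ J`. -/
def IsCriticalSubset {N : ℕ} (u : Fin N → EuclideanSpace ℝ (Fin N))
    (J : Set (Fin N)) : Prop :=
  ∀ i, u i ∈ Submodule.span ℝ (u '' J) ↔ i ∈ J

/-- The subset `C_J` of `T*ℂᴺ` associated to a critical subset `J`. -/
def CJ {N : ℕ} (u : Fin N → EuclideanSpace ℝ (Fin N))
    (μC : HypPhase N → EuclideanSpace ℂ (Fin N)) (J : Set (Fin N)) :
    Set (HypPhase N) :=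
  {p | (∀ i ∈ J, (inner ℂ (toC (u i)) (μC p) : ℂ) = 0) ∧
       (∀ j ∉ J, p.fst j = 0 ∧ p.snd j = 0)}

def P1 (N : ℕ) : HypPhase N →L[ℝ] EuclideanSpace ℂ (Fin N) :=
  (ContinuousLinearMap.fst ℝ _ _).comp (WithLp.prodContinuousLinearEquiv 2 ℝ _ _).toContinuousLinearMap
def P2 (N : ℕ) : HypPhase N →L[ℝ] EuclideanSpace ℂ (Fin N) :=
  (ContinuousLinearMap.snd ℝ _ _).comp (WithLp.prodContinuousLinearEquiv 2 ℝ _ _).toContinuousLinearMap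
def AA (N : ℕ) (j : Fin N) : HypPhase N →L[ℝ] ℂ :=
  ((EuclideanSpace.proj j).restrictScalars ℝ).comp (P1 N)
def BB (N : ℕ) (j : Fin N) : HypPhase N →L[ℝ] ℂ :=
  ((EuclideanSpace.proj j).restrictScalars ℝ).comp (P2 N)

theorem key (N : ℕ) (u : Fin N → EuclideanSpace ℝ (Fin N)) (β : EuclideanSpace ℂ (Fin N))
    (μC : HypPhase N → EuclideanSpace ℂ (Fin N))
    (hμC : ∀ p : HypPhase N, μC p = (∑ j, (p.fst j * p.snd j) • toC (u j)) - β)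
    (f : HypPhase N → ℝ) (hf : ∀ p, f p = ‖μC p‖ ^ 2) (p : HypPhase N) :
    HasFDerivAt f (2 • (innerSL ℝ (μC p)).comp
      (∑ j, ((p.fst j • BB N j + p.snd j • AA N j).smulRight (toC (u j))))) p := by
  have hterm : ∀ j ∈ Finset.univ, HasFDerivAt
      (fun q : HypPhase N => (AA N j q * BB N j q) • toC (u j))
      ((p.fst j • BB N j + p.snd j • AA N j).smulRight (toC (u j))) p := by
    intro j _
    exact ((AA N j).hasFDerivAt.mul (BB N j).hasFDerivAt).smul_const (toC (u j))
  have hsum := (HasFDerivAt.sum hterm).sub_const β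
  have hns := hsum.norm_sq
  have hfun : f = fun q : HypPhase N =>
      ‖(∑ j, (AA N j q * BB N j q) • toC (u j)) - β‖ ^ 2 := by
    funext q; rw [hf q, hμC q]; rfl
  rw [hfun]
  convert hns using 3
  · rfl
  · rfl
  · rfl
  · rw [Finset.sum_apply]
  · rw [hμC p, Finset.sum_apply]; rfl

theorem rinner {N : ℕ} (x y : EuclideanSpace ℂ (Fin N)) :
    (inner ℝ x y : ℝ) = Complex.re (inner ℂ x y : ℂ) := by
  simp [PiLp.inner_apply, map_sum]

theorem key2 (N : ℕ) (u : Fin N → EuclideanSpace ℝ (Fin N)) (β : EuclideanSpace ℂ (Fin N))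
    (μC : HypPhase N → EuclideanSpace ℂ (Fin N))
    (hμC : ∀ p : HypPhase N, μC p = (∑ j, (p.fst j * p.snd j) • toC (u j)) - β)
    (f : HypPhase N → ℝ) (hf : ∀ p, f p = ‖μC p‖ ^ 2) (p : HypPhase N) :
    gradient f p = 0 ↔
      ∀ j, (p.fst j = 0 ∧ p.snd j = 0) ∨ (inner ℂ (toC (u j)) (μC p) : ℂ) = 0 := by
  set d : Fin N → ℂ := fun j => (inner ℂ (μC p) (toC (u j)) : ℂ) with hd
  have hD := key N u β μC hμC f hf p
  have h0 : gradient f p = 0 ↔ fderiv ℝ f p = 0 := by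
    rw [gradient]
    exact LinearIsometryEquiv.map_eq_zero_iff _
  rw [h0, hD.fderiv]
  have hDv : ∀ v : HypPhase N,
      (2 • (innerSL ℝ (μC p)).comp
        (∑ j, ((p.fst j • BB N j + p.snd j • AA N j).smulRight (toC (u j))))) v
      = 2 * Complex.re (∑ j, (p.fst j * v.snd j + p.snd j * v.fst j) * d j) := by
    intro v
    simp only [ContinuousLinearMap.smul_apply, ContinuousLinearMap.comp_apply,
      ContinuousLinearMap.sum_apply, ContinuousLinearMap.smulRight_apply,
      ContinuousLinearMap.add_apply, innerSL_apply_apply, smul_eq_mul, nsmul_eq_mul,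
      Nat.cast_ofNat, hd]
    rw [rinner, inner_sum]
    congr 2
    apply Finset.sum_congr rfl
    intro j _
    rw [inner_smul_right]
    rfl
  constructor
  · intro hz j
    have hv : ∀ v : HypPhase N,
        Complex.re (∑ j, (p.fst j * v.snd j + p.snd j * v.fst j) * d j) = 0 := by
      intro v
      have := congrArg (fun (T : HypPhase N →L[ℝ] ℝ) => T v) hz
      simp only [ContinuousLinearMap.zero_apply] at this
      rw [hDv v] at this
      linarith
    have h2 : p.snd j * d j = 0 := by
      set a := p.snd j * d j with ha
      set v : HypPhase N := (WithLp.equiv 2 _).symm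
        (EuclideanSpace.single j (starRingEnd ℂ a), 0) with hv'
      have := hv v
      have hv1 : ∀ i, v.fst i = EuclideanSpace.single j (starRingEnd ℂ a) i := fun i => rfl
      have hv2 : ∀ i, v.snd i = 0 := fun i => rfl
      rw [Finset.sum_eq_single j] at this
      · rw [hv1, hv2] at this
        simp only [EuclideanSpace.single_apply, if_pos rfl, if_true, mul_zero, zero_add] at this
        have : Complex.re ((starRingEnd ℂ a) * a) = 0 := by
          rw [← this]; congr 1; rw [ha]; ring
        rw [mul_comm, Complex.mul_conj] at this
        simpa using congrArg Complex.ofReal (by simpa using this : Complex.normSq a = 0)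
      · intro i _ hij
        rw [hv1, hv2]
        simp [EuclideanSpace.single_apply, hij]
      · simp
    have h1 : p.fst j * d j = 0 := by
      set a := p.fst j * d j with ha
      set v : HypPhase N := (WithLp.equiv 2 _).symm
        (0, EuclideanSpace.single j (starRingEnd ℂ a)) with hv'
      have := hv v
      have hv2 : ∀ i, v.snd i = EuclideanSpace.single j (starRingEnd ℂ a) i := fun i => rfl
      have hv1 : ∀ i, v.fst i = 0 := fun i => rfl
      rw [Finset.sum_eq_single j] at this
      · rw [hv1, hv2] at this
        simp only [EuclideanSpace.single_apply, if_pos rfl, if_true, mul_zero, add_zero] at this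
        have : Complex.re ((starRingEnd ℂ a) * a) = 0 := by
          rw [← this]; congr 1; rw [ha]; ring
        rw [mul_comm, Complex.mul_conj] at this
        simpa using congrArg Complex.ofReal (by simpa using this : Complex.normSq a = 0)
      · intro i _ hij
        rw [hv1, hv2]
        simp [EuclideanSpace.single_apply, hij]
      · simp
    have flip : d j = 0 ↔ (inner ℂ (toC (u j)) (μC p) : ℂ) = 0 := inner_eq_zero_symm
    rcases mul_eq_zero.1 h1 with h | h
    · rcases mul_eq_zero.1 h2 with h' | h'
      · exact Or.inl ⟨h, h'⟩
      · exact Or.inr (flip.1 h')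
    · exact Or.inr (flip.1 h)
  · intro hp
    ext v
    rw [hDv v]
    have : (∑ j, (p.fst j * v.snd j + p.snd j * v.fst j) * d j) = 0 := by
      apply Finset.sum_eq_zero
      intro j _
      rcases hp j with ⟨h1, h2⟩ | h
      · rw [h1, h2]; ring
      · have : d j = 0 := inner_eq_zero_symm.2 h
        rw [this, mul_zero]
      
    rw [this]
    simp


theorem toC_add {N : ℕ} (a b : EuclideanSpace ℝ (Fin N)) :
    toC (a + b) = toC a + toC b := by
  ext i
  show ((a i + b i : ℝ) : ℂ) = (a i : ℂ) + (b i : ℂ)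
  push_cast; ring

theorem toC_smul {N : ℕ} (r : ℝ) (a : EuclideanSpace ℝ (Fin N)) :
    toC (r • a) = (r : ℂ) • toC a := by
  ext i
  show ((r * a i : ℝ) : ℂ) = (r : ℂ) * (a i : ℂ)
  push_cast; ring

theorem toC_zero {N : ℕ} : toC (0 : EuclideanSpace ℝ (Fin N)) = 0 := by
  ext i
  show ((0 : ℝ) : ℂ) = 0
  simp

/-- A point of `T*ℂᴺ` is a critical point of `f = ‖μ_ℂ‖²` iff it lies
in `C_J` for some critical subset `J`; equivalently, iff for each `j` either
`x_j = y_j = 0` or `⟪u_j, μ_ℂ(x,y)⟫ = 0`. -/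
theorem stmt15 (N : ℕ) (𝔱 : Submodule ℝ (EuclideanSpace ℝ (Fin N)))
    (u : Fin N → EuclideanSpace ℝ (Fin N))
    (hu : ∀ j, u j = (𝔱.orthogonalProjectionOnto (EuclideanSpace.single j 1) :
      EuclideanSpace ℝ (Fin N)))
    (β : EuclideanSpace ℂ (Fin N))
    (hβ : β ∈ Submodule.span ℂ (toC '' (𝔱 : Set (EuclideanSpace ℝ (Fin N)))))
    (μC : HypPhase N → EuclideanSpace ℂ (Fin N))
    (hμC : ∀ p : HypPhase N, μC p = (∑ j, (p.fst j * p.snd j) • toC (u j)) - β)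
    (f : HypPhase N → ℝ) (hf : ∀ p, f p = ‖μC p‖ ^ 2) :
    ∀ p : HypPhase N,
      (gradient f p = 0 ↔ ∃ J : Set (Fin N), IsCriticalSubset u J ∧ p ∈ CJ u μC J) ∧
      (gradient f p = 0 ↔
        ∀ j, (p.fst j = 0 ∧ p.snd j = 0) ∨ (inner ℂ (toC (u j)) (μC p) : ℂ) = 0) := by
  intro p
  have hiff2 := key2 N u β μC hμC f hf p
  refine ⟨?_, hiff2⟩
  rw [hiff2]
  constructor
  · intro hp
    set S : Set (Fin N) := {j | (inner ℂ (toC (u j)) (μC p) : ℂ) = 0} with hS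
    set J : Set (Fin N) := {i | u i ∈ Submodule.span ℝ (u '' S)} with hJ
    have hSJ : S ⊆ J := fun j hj => Submodule.subset_span ⟨j, hj, rfl⟩
    have hspan : Submodule.span ℝ (u '' J) = Submodule.span ℝ (u '' S) := by
      apply le_antisymm
      · rw [Submodule.span_le]
        rintro x ⟨i, hi, rfl⟩
        exact hi
      · exact Submodule.span_mono (Set.image_mono hSJ)
    have hvan : ∀ x ∈ Submodule.span ℝ (u '' S), (inner ℂ (toC x) (μC p) : ℂ) = 0 := by
      intro x hx
      induction hx using Submodule.span_induction with
      | mem x hx => obtain ⟨j, hj, rfl⟩ := hx; exact hj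
      | zero => rw [toC_zero, inner_zero_left]
      | add x y _ _ hx hy => rw [toC_add, inner_add_left, hx, hy, add_zero]
      | smul r x _ hx => rw [toC_smul, inner_smul_left, hx, mul_zero]
    refine ⟨J, ?_, ?_, ?_⟩
    · intro i
      rw [hspan]
      exact Iff.rfl
    · intro i hi
      exact hvan (u i) hi
    · intro j hj
      rcases hp j with h | h
      · exact h
      · exact (hj (hSJ h)).elim
  · rintro ⟨J, hJ, hCJ⟩ j
    by_cases hj : j ∈ J
    · exact Or.inr (hCJ.1 j hj)
    · exact Or.inl (hCJ.2 j hj)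
end
end
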